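/- Let V be a vertex algebra and M a subspace of V containing the vacuum vector 𝟙. Then M is a Mathieu-Zhao subspace of V with respect to the 0-th and (-1)-th products if and only if M = V. -/

import Mathlib

open scoped BigOperators

noncomputable section

/-- The generalized binomial coefficient `p choose i` for `p : ℤ`, as a complex number. -/
def zchoose (p : ℤ) (i : ℕ) : ℂ :=
  (∏ j ∈ Finset.range i, ((p : ℂ) - (j : ℂ))) / (i.factorial : ℂ)

/-- A vertex algebra over `ℂ`: a bilinear system of modes `u ↦ u_n`, a vacuum vector `𝟙`,
truncation, vacuum/creation axioms and the Borcherds (Jacobi) identity. -/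
structure VertexAlgebra (V : Type) [AddCommGroup V] [Module ℂ V] where
  mode : V → ℤ → V → V
  one : V
  mode_add_left : ∀ (u v : V) (n : ℤ) (w : V), mode (u + v) n w = mode u n w + mode v n w
  mode_smul_left : ∀ (c : ℂ) (u : V) (n : ℤ) (w : V), mode (c • u) n w = c • mode u n w
  mode_add_right : ∀ (u : V) (n : ℤ) (v w : V), mode u n (v + w) = mode u n v + mode u n w
  mode_smul_right : ∀ (u : V) (n : ℤ) (c : ℂ) (v : V), mode u n (c • v) = c • mode u n v
  trunc : ∀ u v : V, ∃ N : ℤ, ∀ n ≥ N, mode u n v = 0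
  vacuum_left : ∀ (n : ℤ) (v : V), mode one n v = if n = -1 then v else 0
  creation_nonneg : ∀ (u : V) (n : ℤ), 0 ≤ n → mode u n one = 0
  creation : ∀ u : V, mode u (-1) one = u
  borcherds : ∀ (u v w : V) (p q r : ℤ),
    ∑ᶠ i : ℕ, zchoose p i • mode (mode u (r + i) v) (p + q - i) w =
      ∑ᶠ i : ℕ, ((-1 : ℂ) ^ i * zchoose r i) •
        (mode u (p + r - i) (mode v (q + i) w) -
          ((-1 : ℂ) ^ r) • mode v (q + r - i) (mode u (p + i) w))

/-- A list of mode indices all equal to `0` or `-1`. -/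
def GoodIdx (ns : List ℤ) : Prop := ∀ n ∈ ns, n = 0 ∨ n = -1

namespace VertexAlgebra

variable {V : Type} [AddCommGroup V] [Module ℂ V] (VA : VertexAlgebra V)

/-- The translation operator `𝒟 v = v_{-2} 𝟙`. -/
def D (v : V) : V := VA.mode v (-2) VA.one

/-- `C₂(V) = span_ℂ { u_{-2} v }`. -/
def C2 : Submodule ℂ V := Submodule.span ℂ {w : V | ∃ u v : V, w = VA.mode u (-2) v}

/-- `Cₙ(V) = span_ℂ { u_{-n} v }`. -/
def Cn (n : ℕ) : Submodule ℂ V :=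
  Submodule.span ℂ {w : V | ∃ u v : V, w = VA.mode u (-(n : ℤ)) v}


/-- The iterated word `a_{n₁} a_{n₂} ⋯ a_{n_t} a`. -/
def word (a : V) (ns : List ℤ) : V := ns.foldr (fun n acc => VA.mode a n acc) a

/-- The radical `r_{0,-1}(M)` of a subspace `M` with respect to the 0-th and (-1)-th products. -/
def rad (M : Set V) : Set V :=
  {v : V | ∃ m : ℕ, ∀ ns : List ℤ, GoodIdx ns → m ≤ ns.length → VA.word v ns ∈ M}

/-- The left-strong radical `lsr_{0,-1}(M)`. -/
def lsrad (M : Set V) : Set V :=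
  {v : V | ∀ b : V, ∃ m : ℕ, ∀ (ns : List ℤ) (s : ℤ), GoodIdx ns → m ≤ ns.length →
    (s = 0 ∨ s = -1) → VA.mode b s (VA.word v ns) ∈ M}

/-- The right-strong radical `rsr_{0,-1}(M)`. -/
def rsrad (M : Set V) : Set V :=
  {v : V | ∀ w : V, ∃ m : ℕ, ∀ (ns : List ℤ) (s : ℤ), GoodIdx ns → m ≤ ns.length →
    (s = 0 ∨ s = -1) → VA.mode (VA.word v ns) s w ∈ M}

/-- The strong radical `sr_{0,-1}(M) = lsr_{0,-1}(M) ∩ rsr_{0,-1}(M)`. -/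
def srad (M : Set V) : Set V := VA.lsrad M ∩ VA.rsrad M

/-- `M` is a Mathieu-Zhao subspace of `V` with respect to the 0-th and (-1)-th products. -/
def IsMZ (M : Set V) : Prop := VA.rad M = VA.srad M

/-- A (two-sided) ideal of a vertex algebra. -/
def IsIdeal (I : Submodule ℂ V) : Prop :=
  ∀ (v w : V) (n : ℤ), w ∈ I → VA.mode v n w ∈ I ∧ VA.mode w n v ∈ I

/-- `t`-th power of `a` under the (-1)-th product: `a_{-1}(a_{-1}(⋯ a))`, with `pow a 0 = 𝟙`. -/
def pow (a : V) (t : ℕ) : V :=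
  Nat.rec VA.one (fun _ acc => VA.mode a (-1) acc) t

end VertexAlgebra

/-- A homomorphism of vertex algebras: a linear map preserving all modes and the vacuum. -/
def VertexAlgebra.IsHom {V W : Type} [AddCommGroup V] [Module ℂ V] [AddCommGroup W]
    [Module ℂ W] (VA : VertexAlgebra V) (WA : VertexAlgebra W) (f : V →ₗ[ℂ] W) : Prop :=
  f VA.one = WA.one ∧ ∀ (u v : V) (n : ℤ), f (VA.mode u n v) = WA.mode (f u) n (f v)

/-- A vertex operator algebra: a `ℤ`-graded vertex algebra with finite-dimensional
pieces, grading bounded below, and a conformal vector `ω` whose modes `L(n) = ω_{n+1}`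
satisfy the Virasoro relations, give the grading by `L(0)`, and realize `L(-1) = 𝒟`. -/
structure VertexOperatorAlgebra (V : Type) [AddCommGroup V] [Module ℂ V]
    extends VertexAlgebra V where
  grade : ℤ → Submodule ℂ V
  internal : DirectSum.IsInternal grade
  one_mem : one ∈ grade 0
  mode_grade : ∀ {k m n : ℤ} {u w : V}, u ∈ grade k → w ∈ grade n →
    mode u m w ∈ grade (k + n - m - 1)
  fin_dim : ∀ n : ℤ, FiniteDimensional ℂ (grade n)
  bounded_below : ∃ n₀ : ℤ, ∀ n < n₀, grade n = ⊥
  omega : V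
  omega_mem : omega ∈ grade 2
  central_charge : ℂ
  virasoro : ∀ (m n : ℤ) (v : V),
    mode omega (m + 1) (mode omega (n + 1) v) - mode omega (n + 1) (mode omega (m + 1) v) =
      ((m : ℂ) - (n : ℂ)) • mode omega (m + n + 1) v +
        (if m + n = 0 then (((m : ℂ) ^ 3 - (m : ℂ)) / 12) * central_charge else 0) • v
  L0_grading : ∀ (n : ℤ) (v : V), v ∈ grade n → mode omega 1 v = (n : ℂ) • v
  L_neg1 : ∀ v : V, mode omega 0 v = mode v (-2) one

theorem word_one_replicate {V : Type} [AddCommGroup V] [Module ℂ V] (VA : VertexAlgebra V)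
    (m : ℕ) : VA.word VA.one (List.replicate m (-1)) = VA.one := by
  induction m with
  | zero => rfl
  | succ k ih =>
    show VA.mode VA.one (-1) (VA.word VA.one (List.replicate k (-1))) = VA.one
    rw [ih, VA.vacuum_left]
    simp

/-- If `𝟙 ∈ M`, then `M` is a MZ_{0,-1}-subspace of `V` iff `M = V`. -/
theorem stmt9 {V : Type} [AddCommGroup V] [Module ℂ V] (VA : VertexAlgebra V)
    (M : Submodule ℂ V) (hone : VA.one ∈ M) :
    VA.IsMZ (M : Set V) ↔ M = ⊤ := by
  constructor
  · intro h
    have hrad : VA.one ∈ VA.rad (M : Set V) := by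
      refine ⟨0, fun ns hg _ => ?_⟩
      induction ns with
      | nil => simpa [VertexAlgebra.word] using hone
      | cons n ns ih =>
        have hn := hg n List.mem_cons_self
        have hmem : VA.word VA.one ns ∈ M :=
          ih (fun x hx => hg x (List.mem_cons_of_mem _ hx)) (by simp)
        show VA.mode VA.one n (VA.word VA.one ns) ∈ M
        rw [VA.vacuum_left]
        rcases hn with h0 | h1
        · simp [h0]
        · simpa [h1] using hmem
    have hsrad : VA.one ∈ VA.srad (M : Set V) := by
      unfold VertexAlgebra.IsMZ at h
      rw [h] at hrad
      exact hrad
    rw [eq_top_iff]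
    intro b _
    obtain ⟨m, hm⟩ := hsrad.1 b
    have hgood : GoodIdx (List.replicate m (-1 : ℤ)) :=
      fun x hx => Or.inr (List.eq_of_mem_replicate hx)
    have := hm (List.replicate m (-1)) (-1) hgood (by simp) (Or.inr rfl)
    rw [word_one_replicate, VA.creation] at this
    exact this
  · intro h
    subst h
    unfold VertexAlgebra.IsMZ VertexAlgebra.rad VertexAlgebra.srad VertexAlgebra.lsrad
      VertexAlgebra.rsrad
    ext v
    constructor
    · intro _
      exact ⟨fun b => ⟨0, fun _ _ _ _ _ => Submodule.mem_top⟩,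
             fun w => ⟨0, fun _ _ _ _ _ => Submodule.mem_top⟩⟩
    · intro _
      exact ⟨0, fun _ _ _ => Submodule.mem_top⟩
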